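/- Let (V,q) be a nondegenerate quadratic space over a field F of characteristic 2 and τ an involution in O(V,q) whose Wall form ω_τ is nonalternating (there exists u ∈ R(τ) with ω_τ(u,u) ≠ 0) and diagonalizable with orthogonal basis (u₁,…,u_m) of R(τ). Then V decomposes as an orthogonal direct sum V = W ⊥ V₁ ⊥ ⋯ ⊥ V_m of τ-invariant regular subspaces with τ|_W = id, each V_i 2-dimensional containing u_i, and τ|_{V_i} equal to the reflection τ_{u_i}. -/

import Mathlib

theorem wall_stmt16 {F V : Type*} [Field F] [CharP F 2] [AddCommGroup V] [Module F V]
    [FiniteDimensional F V] (q : QuadraticForm F V)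
    (hq : LinearMap.BilinForm.Nondegenerate (QuadraticMap.polarBilin q))
    (τ : V →ₗ[F] V) (hτ : ∀ x, q (τ x) = q x)
    (hinv : τ ∘ₗ τ = LinearMap.id)
    (hnonalt : ∃ y : V, QuadraticMap.polarBilin q (τ y - y) y ≠ 0)
    (m : ℕ) (u xs : Fin m → V) (hu : ∀ i, τ (xs i) - xs i = u i)
    (hind : LinearIndependent F u)
    (hspan : Submodule.span F (Set.range u) = LinearMap.range (τ - LinearMap.id))
    (horth : ∀ i j, i ≠ j → QuadraticMap.polarBilin q (u i) (xs j) = 0) :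
    ∃ (W : Submodule F V) (Vs : Fin m → Submodule F V),
      W ⊔ (⨆ i, Vs i) = ⊤ ∧
      (∀ i, ∀ x ∈ W, ∀ y ∈ Vs i, QuadraticMap.polarBilin q x y = 0) ∧
      (∀ i j, i ≠ j → ∀ x ∈ Vs i, ∀ y ∈ Vs j, QuadraticMap.polarBilin q x y = 0) ∧
      W ⊓ LinearMap.BilinForm.orthogonal (QuadraticMap.polarBilin q) W = ⊥ ∧
      (∀ i, Vs i ⊓ LinearMap.BilinForm.orthogonal (QuadraticMap.polarBilin q) (Vs i) = ⊥) ∧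
      (∀ x ∈ W, τ x = x) ∧
      (∀ i, ∀ x ∈ Vs i, τ x ∈ Vs i) ∧
      (∀ i, Module.finrank F (Vs i) = 2) ∧
      (∀ i, u i ∈ Vs i) ∧
      (∀ i, ∀ v ∈ Vs i,
        τ v = v - (QuadraticMap.polarBilin q (u i) v / q (u i)) • u i) := by
  classical
  set B := QuadraticMap.polarBilin q with hBdefn
  -- characteristic two facts
  have char2F : (2 : F) = 0 := by exact_mod_cast CharP.cast_eq_zero F 2
  have haa : ∀ a : F, a + a = 0 := fun a => by rw [← two_mul, char2F, zero_mul]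
  have hnegF : ∀ a : F, -a = a := fun a => by rw [neg_eq_iff_add_eq_zero, haa]
  have hvv : ∀ v : V, v + v = 0 := fun v => by
    have h : (2 : F) • v = 0 := by rw [char2F, zero_smul]
    simpa [two_smul] using h
  have hnegV : ∀ v : V, -v = v := fun v => by rw [neg_eq_iff_add_eq_zero, hvv]
  have hsubV : ∀ a c : V, a - c = a + c := fun a c => by rw [sub_eq_add_neg, hnegV]
  -- bilinear form basics
  have hBval : ∀ x y : V, B x y = q (x + y) - q x - q y := fun x y => by
    simp [hBdefn, QuadraticMap.polarBilin_apply_apply, QuadraticMap.polar]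
  have hBsymm : ∀ x y : V, B x y = B y x := fun x y => by
    rw [hBval, hBval, add_comm]; ring
  have hBalt : ∀ x : V, B x x = 0 := fun x => by
    rw [hBval, hvv, map_zero]
    linear_combination -(haa (q x))
  have hBtau : ∀ x y : V, B (τ x) (τ y) = B x y := fun x y => by
    rw [hBval, hBval, ← map_add, hτ, hτ, hτ]
  have htau2 : ∀ x : V, τ (τ x) = x := fun x => congrFun (congrArg DFunLike.coe hinv) x
  have hτxs : ∀ i, τ (xs i) = xs i + u i := fun i => by
    rw [← hu i]; abel
  have hτu : ∀ i, τ (u i) = u i := fun i => by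
    rw [← hu i, map_sub, htau2,
      show xs i - τ (xs i) = -(τ (xs i) - xs i) from by abel, hu i, hnegV]
  have hBufix : ∀ (i : Fin m) (z : V), τ z = z → B (u i) z = 0 := by
    intro i z hz
    have h1 : B (τ (xs i)) z = B (xs i) z := by
      conv_lhs => rw [← hz]
      exact hBtau _ _
    have h2 : B (u i) z = B (τ (xs i)) z - B (xs i) z := by
      rw [← hu i, map_sub, LinearMap.sub_apply]
    rw [h2, h1, sub_self]
  have hBuu : ∀ i j, B (u i) (u j) = 0 := fun i j => hBufix i (u j) (hτu j)
  have hqu : ∀ i, q (u i) = B (u i) (xs i) := by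
    intro i
    rw [hBval, show u i + xs i = τ (xs i) from by rw [hτxs]; abel, hτ]
    linear_combination haa (q (u i))
  have hBux : ∀ i j, B (u i) (xs j) = if i = j then q (u i) else 0 := by
    intro i j
    by_cases h : i = j
    · subst h; rw [if_pos rfl, hqu]
    · rw [if_neg h]; exact horth i j h
  have huz : ∀ i, u i ≠ 0 := fun i => hind.ne_zero i
  have hquz : ∀ i, q (u i) ≠ 0 := by
    intro i h0
    apply huz i
    apply hq.1
    intro v
    have hmem : τ v - v ∈ Submodule.span F (Set.range u) := by
      rw [hspan]; exact ⟨v, by simp⟩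
    obtain ⟨c, hc⟩ := (Submodule.mem_span_range_iff_exists_fun F).mp hmem
    have hfix : τ (v - ∑ j, c j • xs j) = v - ∑ j, c j • xs j := by
      rw [map_sub, map_sum]
      simp only [map_smul, hτxs, smul_add]
      rw [Finset.sum_add_distrib, hc]
      abel
    have h1 : B (u i) (v - ∑ j, c j • xs j) = 0 := hBufix i _ hfix
    have h2 : B (u i) v = B (u i) (v - ∑ j, c j • xs j) + ∑ j, c j • B (u i) (xs j) := by
      rw [map_sub, map_sum]
      simp only [map_smul, smul_eq_mul]
      ring
    rw [h2, h1, zero_add]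
    rw [Finset.sum_congr rfl (fun j _ => by rw [hBux])]
    simp only [smul_eq_mul, mul_ite, mul_zero]
    rw [Finset.sum_ite_eq]
    simp [h0]
  -- Gram–Schmidt correction of the xs
  set lam : Fin m → Fin m → F := fun i j => if i < j then B (xs i) (xs j) / q (u j) else 0
    with hlam
  set z : Fin m → V := fun j => xs j + ∑ k, lam j k • u k with hz
  have hτz : ∀ j, τ (z j) = z j + u j := by
    intro j
    rw [hz]
    simp only [map_add, map_sum, map_smul, hτxs, hτu]
    abel
  have hBuz : ∀ k j, B (u k) (z j) = if k = j then q (u j) else 0 := by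
    intro k j
    rw [hz]
    simp only [map_add, map_sum, map_smul, hBuu, hBux, smul_eq_mul, mul_zero,
      Finset.sum_const_zero, add_zero]
    by_cases h : k = j
    · subst h; simp
    · simp [h]
  have hBzu : ∀ j k, B (z j) (u k) = if k = j then q (u j) else 0 := fun j k => by
    rw [hBsymm]; exact hBuz k j
  have hBxu : ∀ i l, B (xs i) (u l) = if l = i then q (u l) else 0 := fun i l => by
    rw [hBsymm]; exact hBux l i
  have hBzzgen : ∀ i j, B (z i) (z j) = B (xs i) (xs j) + lam j i * q (u i)
      + lam i j * q (u j) := by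
    intro i j
    rw [hz]
    simp only [map_add, map_sum, map_smul, LinearMap.add_apply, LinearMap.sum_apply,
      LinearMap.smul_apply, smul_eq_mul, hBuu, hBux, hBxu, mul_zero, mul_ite,
      Finset.sum_const_zero, add_zero]
    rw [Finset.sum_ite_eq' Finset.univ j fun k => lam i k * q (u k),
      Finset.sum_ite_eq' Finset.univ i fun k => lam j k * q (u k)]
    simp only [Finset.mem_univ, if_true]
    ring
  have hBzz : ∀ i j, B (z i) (z j) = 0 := by
    intro i j
    rcases lt_trichotomy i j with h | h | h
    · rw [hBzzgen, hlam]
      simp only [h, if_pos, not_lt.mpr h.le, asymm h, if_neg, not_false_iff]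
      rw [zero_mul, add_zero, div_mul_cancel₀ _ (hquz j)]
      exact haa _
    · subst h; exact hBalt _
    · rw [hBzzgen, hlam]
      simp only [h, if_pos, not_lt.mpr h.le, asymm h, if_neg, not_false_iff]
      rw [zero_mul, add_zero, div_mul_cancel₀ _ (hquz i), hBsymm (xs i) (xs j)]
      exact haa _
  -- the subspaces
  set Vi : Fin m → Submodule F V := fun i => Submodule.span F {u i, z i} with hVi
  set U : Submodule F V := Submodule.span F (⋃ i, ({u i, z i} : Set V)) with hUdef
  have hUsup : (⨆ i, Vi i) = U := by rw [hUdef, Submodule.span_iUnion]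
  set W : Submodule F V := LinearMap.BilinForm.orthogonal B U with hWdef
  have huU : ∀ i, u i ∈ U :=
    fun i => Submodule.subset_span (Set.mem_iUnion.mpr ⟨i, Set.mem_insert _ _⟩)
  have hzU : ∀ i, z i ∈ U :=
    fun i => Submodule.subset_span (Set.mem_iUnion.mpr ⟨i, Set.mem_insert_of_mem _ rfl⟩)
  have hViU : ∀ i, Vi i ≤ U := by
    intro i
    rw [hVi, hUdef]
    exact Submodule.span_mono (Set.subset_iUnion (fun i => ({u i, z i} : Set V)) i)
  have orthoU : ∀ x : V, (∀ i, B (u i) x = 0) → (∀ i, B (z i) x = 0) →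
      ∀ n ∈ U, B n x = 0 := by
    intro x h1 h2 n hn
    rw [hUdef] at hn
    induction hn using Submodule.span_induction with
    | mem a ha =>
        obtain ⟨i, hi⟩ := Set.mem_iUnion.mp ha
        rcases hi with rfl | hi
        · exact h1 i
        · rw [Set.mem_singleton_iff] at hi; subst hi; exact h2 i
    | zero => simp
    | add a c _ _ pa pc => rw [map_add, LinearMap.add_apply, pa, pc, add_zero]
    | smul r a _ pa => rw [map_smul, LinearMap.smul_apply, pa, smul_zero]
  -- the projection onto U
  set P : V → V := fun v => ∑ i, ((B (z i) v / q (u i)) • u i + (B (u i) v / q (u i)) • z i)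
    with hP
  have hBuP : ∀ i v, B (u i) (P v) = B (u i) v := by
    intro i v
    rw [hP]
    simp only [map_sum, map_add, map_smul, hBuu, hBuz, smul_eq_mul, mul_zero, zero_add,
      mul_ite]
    rw [Finset.sum_ite_eq Finset.univ i fun j => B (u j) v / q (u j) * q (u j)]
    simp only [Finset.mem_univ, if_true]
    rw [div_mul_cancel₀ _ (hquz i)]
  have hBzP : ∀ i v, B (z i) (P v) = B (z i) v := by
    intro i v
    rw [hP]
    simp only [map_sum, map_add, map_smul, hBzu, hBzz, smul_eq_mul, mul_zero, add_zero,
      mul_ite]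
    rw [Finset.sum_ite_eq' Finset.univ i fun j => B (z j) v / q (u j) * q (u i)]
    simp only [Finset.mem_univ, if_true]
    rw [div_mul_cancel₀ _ (hquz i)]
  have hPU : ∀ v, P v ∈ U := by
    intro v
    exact Submodule.sum_mem _ fun i _ =>
      Submodule.add_mem _ (Submodule.smul_mem _ _ (huU i)) (Submodule.smul_mem _ _ (hzU i))
  have hvPW : ∀ v, v - P v ∈ W := by
    intro v
    refine LinearMap.BilinForm.mem_orthogonal_iff.mpr fun n hn => ?_
    refine orthoU _ (fun i => ?_) (fun i => ?_) n hn
    · rw [map_sub, hBuP, sub_self]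
    · rw [map_sub, hBzP, sub_self]
  have hsupUW : U ⊔ W = ⊤ := by
    rw [eq_top_iff]
    intro v _
    exact Submodule.mem_sup.mpr ⟨P v, hPU v, v - P v, hvPW v, by abel⟩
  have hperp : ∀ x : V, (∀ n ∈ U, B n x = 0) → (∀ n ∈ W, B n x = 0) → x = 0 := by
    intro x h1 h2
    apply hq.1
    intro n
    have hn : n ∈ U ⊔ W := hsupUW ▸ Submodule.mem_top
    obtain ⟨a, ha, c, hc, rfl⟩ := Submodule.mem_sup.mp hn
    rw [map_add, hBsymm x a, hBsymm x c, h1 a ha, h2 c hc, add_zero]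
  have hτU : ∀ n ∈ U, τ n ∈ U := by
    intro n hn
    rw [hUdef] at hn
    induction hn using Submodule.span_induction with
    | mem a ha =>
        obtain ⟨i, hi⟩ := Set.mem_iUnion.mp ha
        rcases hi with rfl | hi
        · rw [hτu]; exact huU i
        · rw [Set.mem_singleton_iff] at hi; subst hi
          rw [hτz]; exact Submodule.add_mem _ (hzU i) (huU i)
    | zero => rw [map_zero]; exact Submodule.zero_mem _
    | add a c _ _ pa pc => rw [map_add]; exact Submodule.add_mem _ pa pc
    | smul r a _ pa => rw [map_smul]; exact Submodule.smul_mem _ _ pa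
  refine ⟨W, Vi, ?_, ?_, ?_, ?_, ?_, ?_, ?_, ?_, ?_, ?_⟩
  · rw [hUsup, sup_comm]; exact hsupUW
  · intro i x hx yy hyy
    rw [hBsymm]
    exact hx yy (hViU i hyy)
  · intro i j hij x hx yy hyy
    rw [hVi] at hx hyy
    obtain ⟨a, c, rfl⟩ := Submodule.mem_span_pair.mp hx
    obtain ⟨a', c', rfl⟩ := Submodule.mem_span_pair.mp hyy
    have e1 : B (u i) (z j) = 0 := by rw [hBuz, if_neg hij]
    have e2 : B (z i) (u j) = 0 := by rw [hBzu, if_neg (fun h => hij h.symm)]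
    simp only [map_add, map_smul, LinearMap.add_apply, LinearMap.smul_apply, smul_eq_mul,
      hBuu, hBzz, e1, e2, mul_zero, add_zero, zero_add]
  · rw [eq_bot_iff]
    intro x hx
    obtain ⟨hx1, hx2⟩ := Submodule.mem_inf.mp hx
    have h1 : ∀ n ∈ U, B n x = 0 := fun n hn => hx1 n hn
    have h2 : ∀ n ∈ W, B n x = 0 := fun n hn => hx2 n hn
    simpa using hperp x h1 h2
  · intro i
    rw [eq_bot_iff]
    intro x hx
    obtain ⟨hx1, hx2⟩ := Submodule.mem_inf.mp hx
    have hxU : x ∈ U := hViU i hx1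
    have huVi : u i ∈ Vi i := by rw [hVi]; exact Submodule.subset_span (Set.mem_insert _ _)
    have hzVi : z i ∈ Vi i := by
      rw [hVi]; exact Submodule.subset_span (Set.mem_insert_of_mem _ rfl)
    rw [hVi] at hx1
    obtain ⟨a, c, rfl⟩ := Submodule.mem_span_pair.mp hx1
    have h1 : ∀ n ∈ U, B n (a • u i + c • z i) = 0 := by
      refine orthoU _ (fun j => ?_) (fun j => ?_)
      · by_cases h : j = i
        · subst h; exact hx2 _ huVi
        · have e : B (u j) (z i) = 0 := by rw [hBuz, if_neg h]
          simp only [map_add, map_smul, smul_eq_mul, hBuu, e, mul_zero, add_zero]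
      · by_cases h : j = i
        · subst h; exact hx2 _ hzVi
        · have e : B (z j) (u i) = 0 := by rw [hBzu, if_neg (fun hh => h hh.symm)]
          simp only [map_add, map_smul, smul_eq_mul, e, hBzz, mul_zero, add_zero, zero_add]
    have h2 : ∀ n ∈ W, B n (a • u i + c • z i) = 0 := by
      intro n hn
      rw [hBsymm]
      exact hn _ hxU
    simpa using hperp _ h1 h2
  · intro w hw
    have hτwW : τ w ∈ W := by
      refine LinearMap.BilinForm.mem_orthogonal_iff.mpr fun n hn => ?_
      have h3 : B n (τ w) = B (τ n) w := by
        conv_lhs => rw [← htau2 n]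
        exact hBtau (τ n) w
      show B n (τ w) = 0
      rw [h3]
      exact hw (τ n) (hτU n hn)
    have hdW : τ w - w ∈ W := Submodule.sub_mem _ hτwW hw
    have hdU : τ w - w ∈ U := by
      have hmem : τ w - w ∈ Submodule.span F (Set.range u) := by
        rw [hspan]; exact ⟨w, by simp⟩
      refine Submodule.span_le.mpr ?_ hmem
      rintro _ ⟨i, rfl⟩
      exact huU i
    have hzero : τ w - w = 0 := by
      refine hperp _ (fun n hn => hdW n hn) (fun n hn => ?_)
      rw [hBsymm]
      exact hn _ hdU
    rw [sub_eq_zero] at hzero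
    exact hzero
  · intro i x hx
    rw [hVi] at hx ⊢
    obtain ⟨a, c, rfl⟩ := Submodule.mem_span_pair.mp hx
    rw [map_add, map_smul, map_smul, hτu, hτz]
    exact Submodule.add_mem _
      (Submodule.smul_mem _ _ (Submodule.subset_span (Set.mem_insert _ _)))
      (Submodule.smul_mem _ _ (Submodule.add_mem _
        (Submodule.subset_span (Set.mem_insert_of_mem _ rfl))
        (Submodule.subset_span (Set.mem_insert _ _))))
  · intro i
    have hli : LinearIndependent F ![u i, z i] := by
      rw [LinearIndependent.pair_iff]
      intro s t hst
      have h1 : B (u i) (s • u i + t • z i) = 0 := by rw [hst, map_zero]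
      have h2 : B (z i) (s • u i + t • z i) = 0 := by rw [hst, map_zero]
      simp only [map_add, map_smul, smul_eq_mul, hBuu, hBuz, hBzu, hBzz, if_pos rfl,
        if_true, eq_self_iff_true, mul_zero, zero_add, add_zero] at h1 h2
      constructor
      · rcases mul_eq_zero.mp h2 with h | h
        · exact h
        · exact absurd h (hquz i)
      · rcases mul_eq_zero.mp h1 with h | h
        · exact h
        · exact absurd h (hquz i)
    have hrange : Set.range ![u i, z i] = {u i, z i} := by
      simp only [Matrix.range_cons, Matrix.range_empty, Set.union_empty,
        Set.union_singleton]
      exact Set.pair_comm (z i) (u i)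
    have : Vi i = Submodule.span F (Set.range ![u i, z i]) := by rw [hVi, hrange]
    rw [this, finrank_span_eq_card hli]
    simp
  · intro i
    rw [hVi]
    exact Submodule.subset_span (Set.mem_insert _ _)
  · intro i v hv
    rw [hVi] at hv
    obtain ⟨a, c, rfl⟩ := Submodule.mem_span_pair.mp hv
    have hc : B (u i) (a • u i + c • z i) = c * q (u i) := by
      simp only [map_add, map_smul, smul_eq_mul, hBuu, hBuz, if_pos rfl, if_true,
        eq_self_iff_true, mul_zero, zero_add]
    rw [map_add, map_smul, map_smul, hτu, hτz, hc, mul_div_assoc, div_self (hquz i),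
      mul_one, smul_add, hsubV]
    abel
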